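/- arXiv:0912.4887 — 2 statements merged into one kernel-verified Lean document; each statement's English description precedes it below -/
import Mathlib

section
/- Let F be a finite field and let f : X → Y be a universal homeomorphism between separated F-schemes of finite type. Then the induced map X(F) → Y(F) on F-rational points is a bijection; in particular, the finite sets X(F) and Y(F) have the same cardinality. -/
open CategoryTheory AlgebraicGeometry CategoryTheory.Limits

/-- If `f` is a separated morphism of schemes whose diagonal is surjective, then morphisms
from reduced schemes into the source are determined by their composition with `f`. -/
lemma eq_of_comp_eq_of_diagonal_surjective {X Y : Scheme} (f : X ⟶ Y) [IsSeparated f]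
    (hd : AlgebraicGeometry.Surjective (pullback.diagonal f))
    {W : Scheme} [IsReduced W] (u₁ u₂ : W ⟶ X) (h : u₁ ≫ f = u₂ ≫ f) : u₁ = u₂ := by
  let h' : W ⟶ pullback f f := pullback.lift u₁ u₂ h
  have hci : IsClosedImmersion (pullback.snd (pullback.diagonal f) h') :=
    MorphismProperty.IsStableUnderBaseChange.of_isPullback (IsPullback.of_hasPullback _ _) inferInstance
  have hsurj : AlgebraicGeometry.Surjective (pullback.snd (pullback.diagonal f) h') :=
    MorphismProperty.IsStableUnderBaseChange.of_isPullback (IsPullback.of_hasPullback _ _) hd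
  have : IsIso (pullback.snd (pullback.diagonal f) h') :=
    isIso_of_isClosedImmersion_of_surjective _
  have hfac : h' = inv (pullback.snd (pullback.diagonal f) h') ≫
      pullback.fst (pullback.diagonal f) h' ≫ pullback.diagonal f := by
    rw [pullback.condition, IsIso.inv_hom_id_assoc]
  have e1 : u₁ = h' ≫ pullback.fst f f := (pullback.lift_fst _ _ _).symm
  have e2 : u₂ = h' ≫ pullback.snd f f := (pullback.lift_snd _ _ _).symm
  rw [e1, e2, hfac]
  simp

/-- A ring homomorphism from a finite field that admits a retraction is bijective. -/
lemma aux_bij {K F : Type*} [Field K] [Field F] [Fintype F]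
    (ψ : F →+* K) (φ : K →+* F) :
    Function.Bijective ψ := by
  have hφ : Function.Injective φ := φ.injective
  have : Finite K := Finite.of_injective φ hφ
  cases nonempty_fintype K
  exact (Fintype.bijective_iff_injective_and_card ψ).2 ⟨ψ.injective,
    le_antisymm (Fintype.card_le_of_injective ψ ψ.injective)
      (Fintype.card_le_of_injective φ hφ)⟩

/-- A morphism of schemes is a universal homeomorphism if every base change of it
is a homeomorphism on underlying topological spaces. -/
def IsUniversalHomeomorphism {X Y : Scheme} (f : X ⟶ Y) : Prop :=
  (AlgebraicGeometry.topologically @IsHomeomorph).universally f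

/-- if `F` is a finite field and `f : X ⟶ Y` a universal homeomorphism
between separated `F`-schemes of finite type, then composition with `f` is a bijection
from the set `X(F)` of `F`-rational points of `X` to the set `Y(F)` of `F`-rational
points of `Y`; in particular `X(F)` and `Y(F)` have the same cardinality. -/
theorem statement3 (F : Type) [Field F] [Fintype F]
    (X Y : Scheme)
    (sX : X ⟶ Spec (CommRingCat.of F)) (sY : Y ⟶ Spec (CommRingCat.of F))
    [LocallyOfFiniteType sX] [QuasiCompact sX] [IsSeparated sX]
    [LocallyOfFiniteType sY] [QuasiCompact sY] [IsSeparated sY]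
    (f : X ⟶ Y) (hf : f ≫ sY = sX)
    (huniv : IsUniversalHomeomorphism f) :
    Function.Bijective
      (fun a : {a : Spec (CommRingCat.of F) ⟶ X // a ≫ sX = 𝟙 _} =>
        (⟨a.1 ≫ f, by rw [Category.assoc, hf, a.2]⟩ :
          {b : Spec (CommRingCat.of F) ⟶ Y // b ≫ sY = 𝟙 _})) := by
  -- `f` is separated
  have hsep : IsSeparated f := by
    have : IsSeparated (f ≫ sY) := by rw [hf]; infer_instance
    exact IsSeparated.of_comp f sY
  -- the diagonal of `f` is surjective
  have hd : AlgebraicGeometry.Surjective (pullback.diagonal f) := by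
    have hsnd : IsHomeomorph (pullback.snd f f).base :=
      huniv (pullback.fst f f) f (pullback.snd f f) (IsPullback.of_hasPullback f f).flip
    constructor
    intro z
    refine ⟨(pullback.snd f f).base z, hsnd.injective ?_⟩
    show (pullback.diagonal f ≫ pullback.snd f f).base _ = _
    rw [pullback.diagonal_snd]
    rfl
  -- `f` itself is a homeomorphism
  have hfh : IsHomeomorph f.base := huniv (𝟙 X) (𝟙 Y) f (IsPullback.of_id_snd)
  constructor
  · intro a₁ a₂ e
    exact Subtype.ext (eq_of_comp_eq_of_diagonal_surjective f hd _ _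
      (congrArg Subtype.val e))
  · rintro ⟨b, hb⟩
    set y := b.base (IsLocalRing.closedPoint F) with hy
    obtain ⟨x, hx⟩ := hfh.surjective y
    set φ : Y.residueField y ⟶ CommRingCat.of F :=
      Y.descResidueField (Scheme.stalkClosedPointTo b) with hφdef
    have hbφ : Spec.map φ ≫ Y.fromSpecResidueField y = b :=
      Scheme.descResidueField_stalkClosedPointTo_fromSpecResidueField F Y b
    set ψ : CommRingCat.of F ⟶ Y.residueField y :=
      Spec.preimage (Y.fromSpecResidueField y ≫ sY) with hψdef
    have hψ : Spec.map ψ = Y.fromSpecResidueField y ≫ sY := Spec.map_preimage _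
    have hψφ : ψ ≫ φ = 𝟙 (CommRingCat.of F) := by
      apply Spec.map_injective
      rw [Spec.map_comp, hψ, Spec.map_id, ← Category.assoc, hbφ, hb]
    have hcomp : ∀ c : F, φ (ψ c) = c := fun c => by
      have := congrArg (fun (g : CommRingCat.of F ⟶ CommRingCat.of F) => g c) hψφ
      simpa using this
    -- ψ is bijective
    have hψbij : Function.Bijective ψ := aux_bij (F := F) (K := Y.residueField y) ψ.hom φ.hom
    set q := Fintype.card F with hqdef
    have hpowy : ∀ a : Y.residueField y, a ^ q = a := fun a => by
      obtain ⟨c, rfl⟩ := hψbij.surjective a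
      rw [← map_pow, FiniteField.pow_card]
    set e := Y.residueFieldCongr hx with hedef
    have hpowx : ∀ a : Y.residueField (f.base x), a ^ q = a := fun a => by
      have hinj : Function.Injective e.hom := RingHom.injective _
      apply hinj
      rw [map_pow, hpowy]
    set ρ := f.residueFieldMap x with hρdef
    set ι : CommRingCat.of F ⟶ X.residueField x := ψ ≫ e.inv ≫ ρ with hιdef
    have hιinj : Function.Injective ι := RingHom.injective _
    -- characteristic
    set p := ringChar F with hpdef
    obtain ⟨n, hp, hq⟩ := FiniteField.card F p
    haveI : CharP (X.residueField x) p := charP_of_injective_ringHom hιinj p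
    haveI : ExpChar (X.residueField x) p := ExpChar.prime hp
    set ν : X.residueField x ⟶ X.residueField x :=
      CommRingCat.ofHom (iterateFrobenius (X.residueField x) p n) with hνdef
    have hρν : ρ ≫ ν = ρ := by
      ext a
      show ν (ρ a) = ρ a
      rw [hνdef]
      show iterateFrobenius _ p n (ρ a) = ρ a
      rw [iterateFrobenius_def, ← hq, ← map_pow, hpowx]
    set u := X.fromSpecResidueField x with hudef
    have huf : u ≫ f = Spec.map ρ ≫ Y.fromSpecResidueField (f.base x) :=
      (Scheme.Hom.SpecMap_residueFieldMap_fromSpecResidueField f x).symm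
    have hν2 : (Spec.map ν ≫ u) ≫ f = u ≫ f := by
      rw [Category.assoc, huf, ← Spec.map_comp_assoc, hρν]
    -- pretend we have the diagonal lemma:
    have hid : Spec.map ν ≫ u = u :=
      eq_of_comp_eq_of_diagonal_surjective f hd _ _ hν2
    have hνid : ν = 𝟙 (X.residueField x) := by
      apply Spec.map_injective
      rw [Spec.map_id]
      exact (cancel_mono u).1 (by rw [hid, Category.id_comp])
    have hKpow : ∀ a : X.residueField x, a ^ q = a := fun a => by
      have h1 := congrArg (fun (g : X.residueField x ⟶ X.residueField x) => g a) hνid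
      have h2 : iterateFrobenius (X.residueField x) p (n : ℕ) a = a := h1
      rwa [iterateFrobenius_def, ← hq] at h2
    -- K is finite with at most q elements
    set P : Polynomial (X.residueField x) := Polynomial.X ^ q - Polynomial.X with hPdef
    have hq1 : 1 < q := Fintype.one_lt_card
    have hPne : P ≠ 0 := fun h0 => by
      have := congrArg (fun r => Polynomial.coeff r q) h0
      simp only [hPdef, Polynomial.coeff_sub, Polynomial.coeff_X_pow, Polynomial.coeff_X,
        if_pos rfl, if_neg (by omega : ¬ (1 = q)), Polynomial.coeff_zero] at this
      simp at this
    have hroot : ∀ a : X.residueField x, P.IsRoot a := fun a => by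
      simp [hPdef, Polynomial.IsRoot, hKpow a]
    classical
    have hfinK : Finite (X.residueField x) :=
      Set.finite_univ_iff.mp ((Polynomial.finite_setOf_isRoot hPne).subset
        (fun a _ => hroot a))
    cases nonempty_fintype (X.residueField x)
    have hcardle : Fintype.card (X.residueField x) ≤ q := by
      have hsub : (Finset.univ : Finset (X.residueField x)) ⊆ P.roots.toFinset :=
        fun a _ => Multiset.mem_toFinset.2 (Polynomial.mem_roots'.2 ⟨hPne, hroot a⟩)
      calc Fintype.card (X.residueField x) = Finset.univ.card := rfl
        _ ≤ P.roots.toFinset.card := Finset.card_le_card hsub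
        _ ≤ Multiset.card P.roots := Multiset.toFinset_card_le _
        _ ≤ P.natDegree := Polynomial.card_roots' P
        _ ≤ q := by
            refine (Polynomial.natDegree_sub_le _ _).trans ?_
            simp only [Polynomial.natDegree_X_pow, Polynomial.natDegree_X]
            omega
    have hιbij : Function.Bijective ι := by
      refine (Fintype.bijective_iff_injective_and_card ι).2 ⟨hιinj, le_antisymm ?_ hcardle⟩
      exact Fintype.card_le_of_injective ι hιinj
    set χ := (RingEquiv.ofBijective ι.hom hιbij).symm with hχdef
    set χm : X.residueField x ⟶ CommRingCat.of F := CommRingCat.ofHom χ.toRingHom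
      with hχmdef
    set a := Spec.map χm ≫ u with hadef
    have hring : ρ ≫ χm = e.hom ≫ φ := by
      ext z
      obtain ⟨c, hc⟩ := hψbij.surjective (e.hom z)
      have hz : e.inv (ψ c) = z := by
        rw [hc, ← CommRingCat.comp_apply, e.hom_inv_id, CommRingCat.id_apply]
      rw [← hz]
      show χm (ρ (e.inv (ψ c))) = φ (e.hom (e.inv (ψ c)))
      have h2 : e.hom (e.inv (ψ c)) = ψ c := by
        rw [← CommRingCat.comp_apply, e.inv_hom_id, CommRingCat.id_apply]
      rw [h2, hcomp]
      show χ (ι c) = c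
      exact (RingEquiv.ofBijective ι.hom hιbij).symm_apply_apply c
    have haf : a ≫ f = b := by
      rw [hadef, Category.assoc, huf, ← Spec.map_comp_assoc, hring, Spec.map_comp_assoc,
        ← hbφ]
      rw [Y.residueFieldCongr_fromSpecResidueField hx]
    refine ⟨⟨a, ?_⟩, Subtype.ext haf⟩
    rw [← hf, ← Category.assoc, haf, hb]
end

section
/- Let F be a perfect field and let f : X → Y be a universal homeomorphism between separated F-schemes of finite type (f a morphism of F-schemes). Then the induced map X(F) → Y(F) on F-rational points is a bijection. -/
open CategoryTheory AlgebraicGeometry CategoryTheory.Limits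

/-- A separated universal homeomorphism cannot be equalized by two distinct morphisms
from a reduced scheme. -/
lemma IsUniversalHomeomorphism.cancel {X Y : Scheme} (f : X ⟶ Y) [IsSeparated f]
    (huniv : IsUniversalHomeomorphism f) {T : Scheme} [IsReduced T]
    (u v : T ⟶ X) (h : u ≫ f = v ≫ f) : u = v := by
  have hs : IsHomeomorph (pullback.snd f f).base :=
    huniv _ _ _ (IsPullback.of_hasPullback f f).flip
  haveI hdiag : Surjective (pullback.diagonal f) := by
    constructor
    intro z
    refine ⟨(pullback.snd f f).base z, hs.injective ?_⟩
    rw [← Scheme.Hom.comp_apply, pullback.diagonal_snd]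
    rfl
  set c : T ⟶ pullback f f := pullback.lift u v h with hc
  set s := pullback.snd (pullback.diagonal f) c with hsdef
  haveI : IsClosedImmersion s :=
    MorphismProperty.of_isPullback (P := @IsClosedImmersion) (IsPullback.of_hasPullback _ _)
      (inferInstanceAs (IsClosedImmersion (pullback.diagonal f)))
  haveI : Surjective s :=
    MorphismProperty.of_isPullback (P := @Surjective) (IsPullback.of_hasPullback _ _) hdiag
  haveI : IsIso s := isIso_of_isClosedImmersion_of_surjective s
  have hw : pullback.fst (pullback.diagonal f) c ≫ pullback.diagonal f = s ≫ c :=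
    pullback.condition
  have hcc : inv s ≫ pullback.fst (pullback.diagonal f) c ≫ pullback.diagonal f = c := by
    rw [hw, IsIso.inv_hom_id_assoc]
  have hu : u = c ≫ pullback.fst f f := (pullback.lift_fst _ _ _).symm
  have hv : v = c ≫ pullback.snd f f := (pullback.lift_snd _ _ _).symm
  rw [hu, hv, ← hcc]
  simp

/-- if `F` is a perfect field and `f : X ⟶ Y` a universal homeomorphism
between separated `F`-schemes of finite type (a morphism of `F`-schemes), then composition
with `f` is a bijection
from the set `X(F)` of `F`-rational points of `X` to the set `Y(F)` of `F`-rational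
points of `Y`. -/
theorem statement4 (F : Type) [Field F] [PerfectField F]
    (X Y : Scheme)
    (sX : X ⟶ Spec (CommRingCat.of F)) (sY : Y ⟶ Spec (CommRingCat.of F))
    [LocallyOfFiniteType sX] [QuasiCompact sX] [IsSeparated sX]
    [LocallyOfFiniteType sY] [QuasiCompact sY] [IsSeparated sY]
    (f : X ⟶ Y) (hf : f ≫ sY = sX)
    (huniv : IsUniversalHomeomorphism f) :
    Function.Bijective
      (fun a : {a : Spec (CommRingCat.of F) ⟶ X // a ≫ sX = 𝟙 _} =>
        (⟨a.1 ≫ f, by rw [Category.assoc, hf, a.2]⟩ :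
          {b : Spec (CommRingCat.of F) ⟶ Y // b ≫ sY = 𝟙 _})) := by
  haveI : IsSeparated (f ≫ sY) := by rw [hf]; infer_instance
  haveI hsep : IsSeparated f := IsSeparated.of_comp f sY
  haveI : LocallyOfFiniteType (f ≫ sY) := by rw [hf]; infer_instance
  haveI hfl : LocallyOfFiniteType f := locallyOfFiniteType_of_comp f sY
  constructor
  · rintro ⟨a, ha⟩ ⟨a', ha'⟩ hEq
    exact Subtype.ext (huniv.cancel f a a' (congrArg Subtype.val hEq))
  · rintro ⟨b, hb⟩
    -- base change of `f` along `b`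
    set P : Scheme := pullback f b with hP
    set p : P ⟶ Spec (CommRingCat.of F) := pullback.snd f b with hp
    have hsnd : IsHomeomorph p.base := huniv _ _ _ (IsPullback.of_hasPullback f b).flip
    haveI : Subsingleton P := ⟨fun x y => hsnd.injective (Subsingleton.elim _ _)⟩
    obtain ⟨pt, -⟩ := hsnd.surjective default
    -- `P` is affine
    set g := P.affineCover.f (P.affineCover.idx pt) with hg
    haveI : Surjective g := by
      constructor
      intro y
      obtain ⟨z, hz⟩ := P.affineCover.covers pt
      exact ⟨z, hz.trans (Subsingleton.elim pt y)⟩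
    haveI : Epi g.base := (TopCat.epi_iff_surjective _).mpr g.surjective
    haveI : IsIso g := IsOpenImmersion.isIso g
    haveI : IsAffine P := IsAffine.of_isIso (inv g)
    set A : CommRingCat := Γ(P, ⊤) with hA
    set e : Spec A ⟶ P := P.isoSpec.inv with he
    set φ : CommRingCat.of F ⟶ A := Spec.preimage (e ≫ p) with hφ'
    have hφ : Spec.map φ = e ≫ p := Spec.map_preimage _
    letI : Algebra F ↥A := RingHom.toAlgebra φ.hom
    have halg : algebraMap F ↥A = φ.hom := rfl
    -- `A` is nontrivial
    haveI : Nontrivial ↥A := by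
      by_contra h
      rw [not_nontrivial_iff_subsingleton] at h
      exact (P.isoSpec.hom.base pt).isPrime.ne_top (Subsingleton.elim _ _)
    obtain ⟨m, hm⟩ := Ideal.exists_maximal ↥A
    haveI := hm
    letI : Field (↥A ⧸ m) := Ideal.Quotient.field m
    -- the residue field is a finite separable extension of `F`
    haveI : LocallyOfFiniteType p :=
      MorphismProperty.of_isPullback (P := @LocallyOfFiniteType) (IsPullback.of_hasPullback _ _) hfl
    haveI : LocallyOfFiniteType (Spec.map φ) := by rw [hφ]; infer_instance
    have hFT : RingHom.FiniteType φ.hom :=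
      (HasRingHomProperty.Spec_iff (P := @LocallyOfFiniteType)).mp ‹_›
    letI : Algebra.FiniteType F ↥A := hFT
    haveI : Algebra.FiniteType F (↥A ⧸ m) :=
      Algebra.FiniteType.of_surjective (Ideal.Quotient.mkₐ F m)
        (Ideal.Quotient.mkₐ_surjective F m)
    haveI : Module.Finite F (↥A ⧸ m) := finite_of_finite_type_of_isJacobsonRing F _
    haveI : Algebra.IsAlgebraic F (↥A ⧸ m) := Algebra.IsAlgebraic.of_finite F _
    haveI : Algebra.IsSeparable F (↥A ⧸ m) := inferInstance
    -- all `F`-embeddings of the residue field into a field extension agree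
    set L := AlgebraicClosure (↥A ⧸ m) with hL
    haveI : IsSeparated p :=
      MorphismProperty.of_isPullback (P := @IsSeparated) (IsPullback.of_hasPullback _ _) hsep
    have hup : (AlgebraicGeometry.topologically @IsHomeomorph).universally p :=
      MorphismProperty.of_isPullback (IsPullback.of_hasPullback _ _) huniv
    have hmk : ∀ (c : F), Ideal.Quotient.mk m (φ c) = algebraMap F (↥A ⧸ m) c := by
      intro c
      rw [IsScalarTower.algebraMap_apply F ↥A (↥A ⧸ m)]
      rfl
    have hsub : Subsingleton ((↥A ⧸ m) →ₐ[F] L) := by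
      constructor
      intro σ τ
      set σ' : A ⟶ CommRingCat.of L :=
        CommRingCat.ofHom (σ.toRingHom.comp (Ideal.Quotient.mk m)) with hσ'
      set τ' : A ⟶ CommRingCat.of L :=
        CommRingCat.ofHom (τ.toRingHom.comp (Ideal.Quotient.mk m)) with hτ'
      have key : ∀ (ρ : (↥A ⧸ m) →ₐ[F] L),
          φ ≫ CommRingCat.ofHom (ρ.toRingHom.comp (Ideal.Quotient.mk m)) =
            CommRingCat.ofHom (algebraMap F L) := by
        intro ρ
        ext c
        show ρ (Ideal.Quotient.mk m (φ c)) = algebraMap F L c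
        rw [hmk c, AlgHom.commutes]
      have hστ : (Spec.map σ' ≫ e) ≫ p = (Spec.map τ' ≫ e) ≫ p := by
        rw [Category.assoc, Category.assoc, ← hφ, ← Spec.map_comp, ← Spec.map_comp,
          key σ, key τ]
      haveI : _root_.IsReduced ↥(CommRingCat.of L) := inferInstanceAs (_root_.IsReduced L)
      haveI : AlgebraicGeometry.IsReduced (Spec (CommRingCat.of L)) := inferInstance
      have h2 := IsUniversalHomeomorphism.cancel p hup (Spec.map σ' ≫ e) (Spec.map τ' ≫ e) hστ
      rw [cancel_mono] at h2
      have h3 : σ' = τ' := Spec.map_injective h2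
      ext x
      obtain ⟨a, rfl⟩ := Ideal.Quotient.mk_surjective x
      exact RingHom.congr_fun (congrArg CommRingCat.Hom.hom h3) a
    -- hence the residue field is `F` itself
    have hfr : Module.finrank F (↥A ⧸ m) = 1 := by
      have h1 := Field.finSepDegree_eq_finrank_of_isSeparable F (↥A ⧸ m)
      rw [← h1]
      haveI : Nonempty ((↥A ⧸ m) →ₐ[F] L) := ⟨IsScalarTower.toAlgHom F (↥A ⧸ m) L⟩
      exact Nat.card_eq_one_iff_unique.mpr ⟨hsub, ‹_›⟩
    have hbij : Function.Bijective (algebraMap F (↥A ⧸ m)) := by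
      refine ⟨(algebraMap F (↥A ⧸ m)).injective, fun x => ?_⟩
      have hbot : (⊥ : Subalgebra F (↥A ⧸ m)) = ⊤ := Subalgebra.bot_eq_top_of_finrank_eq_one hfr
      have : x ∈ (⊥ : Subalgebra F (↥A ⧸ m)) := hbot.symm ▸ trivial
      exact Algebra.mem_bot.mp this
    set ν := RingEquiv.ofBijective (algebraMap F (↥A ⧸ m)) hbij with hν
    set ψ : A ⟶ CommRingCat.of F :=
      CommRingCat.ofHom (ν.symm.toRingHom.comp (Ideal.Quotient.mk m)) with hψ
    have hψφ : φ ≫ ψ = 𝟙 _ := by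
      ext c
      show ν.symm (Ideal.Quotient.mk m (φ c)) = c
      rw [hmk c]
      exact ν.symm_apply_apply c
    -- the rational point of `X`
    refine ⟨⟨Spec.map ψ ≫ e ≫ pullback.fst f b, ?_⟩, ?_⟩
    · have : (Spec.map ψ ≫ e ≫ pullback.fst f b) ≫ f = b := by
        rw [Category.assoc, Category.assoc, pullback.condition, ← Category.assoc e, ← hφ,
          ← Category.assoc, ← Spec.map_comp, hψφ, Spec.map_id, Category.id_comp]
      rw [← hf, ← Category.assoc, this, hb]
    · apply Subtype.ext
      show (Spec.map ψ ≫ e ≫ pullback.fst f b) ≫ f = b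
      rw [Category.assoc, Category.assoc, pullback.condition, ← Category.assoc e, ← hφ,
        ← Category.assoc, ← Spec.map_comp, hψφ, Spec.map_id, Category.id_comp]
end
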